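/- arXiv:1602.02897 — 4 statements merged into one kernel-verified Lean document; each statement's English description precedes it below -/
import Mathlib

section
/- Let α ∈ [1,2), μ > 0, and let x : ℝ → ℝ² \ {0} be an entire zero-energy solution of ẍ = -μ x/|x|^{α+2} with nonzero angular momentum c, written in polar coordinates x(t) = r(t) e^{iθ(t)}. Then the limits θ(±∞) = lim_{t→±∞} θ(t) exist and |θ(+∞) - θ(-∞)| = 2π/(2-α). -/
open Filter

/-- The Euclidean norm on `ℝ × ℝ`. -/
noncomputable def enorm2 (p : ℝ × ℝ) : ℝ := Real.sqrt (p.1 ^ 2 + p.2 ^ 2)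

open Set Real

lemma myHasDerivAt_fst {x : ℝ → ℝ × ℝ} {v : ℝ × ℝ} {t : ℝ} (h : HasDerivAt x v t) :
    HasDerivAt (fun t => (x t).1) v.1 t := by
  have h2 := (hasFDerivAt_fst (𝕜 := ℝ) (p := x t)).comp t h.hasFDerivAt
  simpa [Function.comp_def] using h2.hasDerivAt

lemma myHasDerivAt_snd {x : ℝ → ℝ × ℝ} {v : ℝ × ℝ} {t : ℝ} (h : HasDerivAt x v t) :
    HasDerivAt (fun t => (x t).2) v.2 t := by
  have h2 := (hasFDerivAt_snd (𝕜 := ℝ) (p := x t)).comp t h.hasFDerivAt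
  simpa [Function.comp_def] using h2.hasDerivAt

/-- comparison of two functions via derivative comparison on `Ici a` -/
lemma deriv_compare_Ici {f g φ ψ : ℝ → ℝ} {a : ℝ}
    (hf : ∀ t, HasDerivAt f (g t) t) (hφ : ∀ t, HasDerivAt φ (ψ t) t)
    (h : ∀ t ∈ Ici a, ψ t ≤ g t) : ∀ t ∈ Ici a, φ t - φ a ≤ f t - f a := by
  have hmono : MonotoneOn (fun t => f t - φ t) (Ici a) := by
    apply monotoneOn_of_deriv_nonneg (convex_Ici a)
    · exact (Continuous.sub (continuous_iff_continuousAt.2 fun t => (hf t).continuousAt)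
        (continuous_iff_continuousAt.2 fun t => (hφ t).continuousAt)).continuousOn
    · intro t ht
      exact ((hf t).sub (hφ t)).differentiableAt.differentiableWithinAt
    · intro t ht
      rw [show (fun t => f t - φ t) = f - φ from rfl, ((hf t).sub (hφ t)).deriv]
      have := h t (le_of_lt (by simpa using ht))
      linarith
  intro t ht
  have := hmono (self_mem_Ici) ht ht
  simp only at this; linarith

/-- comparison of two functions via derivative comparison on `Iic a` -/
lemma deriv_compare_Iic {f g φ ψ : ℝ → ℝ} {a : ℝ}
    (hf : ∀ t, HasDerivAt f (g t) t) (hφ : ∀ t, HasDerivAt φ (ψ t) t)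
    (h : ∀ t ∈ Iic a, ψ t ≤ g t) : ∀ t ∈ Iic a, f t - f a ≤ φ t - φ a := by
  have hmono : MonotoneOn (fun t => f t - φ t) (Iic a) := by
    apply monotoneOn_of_deriv_nonneg (convex_Iic a)
    · exact (Continuous.sub (continuous_iff_continuousAt.2 fun t => (hf t).continuousAt)
        (continuous_iff_continuousAt.2 fun t => (hφ t).continuousAt)).continuousOn
    · intro t ht
      exact ((hf t).sub (hφ t)).differentiableAt.differentiableWithinAt
    · intro t ht
      rw [show (fun t => f t - φ t) = f - φ from rfl, ((hf t).sub (hφ t)).deriv]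
      have := h t (le_of_lt (by simpa using ht))
      linarith
  intro t ht
  have := hmono ht (self_mem_Iic) ht
  simp only at this; linarith

/-- Two functions continuous with equal derivatives on `Ioi a` and equal at `a`
agree on `Ici a`. -/
lemma eq_on_Ici {f g d : ℝ → ℝ} {a : ℝ}
    (hfc : Continuous f) (hgc : Continuous g)
    (hfd : ∀ t ∈ Ioi a, HasDerivAt f (d t) t)
    (hgd : ∀ t ∈ Ioi a, HasDerivAt g (d t) t)
    (ha : f a = g a) : ∀ t ∈ Ici a, f t = g t := by
  have key : ∀ u w : ℝ, a < u → u ≤ w → f u - g u = f w - g w := by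
    intro u w hu huw
    have := constant_of_has_deriv_right_zero (f := fun t => f t - g t) (a := u) (b := w)
      ((hfc.sub hgc).continuousOn)
      (fun z hz => by
        have hz' : a < z := lt_of_lt_of_le hu hz.1
        have : HasDerivAt (fun t => f t - g t) 0 z := by
          simpa [Pi.sub_def] using (hfd z hz').sub (hgd z hz')
        exact this.hasDerivWithinAt) w (right_mem_Icc.2 huw)
    simpa using this.symm
  intro t ht
  rcases eq_or_lt_of_le (show a ≤ t from ht) with h | h
  · rw [← h, ha]
  · -- use continuity at a from the right
    have h1 : Tendsto (fun u => f u - g u) (nhdsWithin a (Ioi a)) (nhds (f a - g a)) :=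
      ((hfc.sub hgc).tendsto a).mono_left nhdsWithin_le_nhds
    have h2 : Tendsto (fun u => f u - g u) (nhdsWithin a (Ioi a)) (nhds (f t - g t)) := by
      apply Tendsto.congr' _ tendsto_const_nhds
      filter_upwards [Ioo_mem_nhdsGT_of_mem (Set.left_mem_Ico.2 h)] with u hu
      exact (key u t hu.1 hu.2.le).symm
    have := tendsto_nhds_unique h1 h2
    rw [ha] at this
    linarith
  
/-- Mirror version on `Iic a`. -/
lemma eq_on_Iic {f g d : ℝ → ℝ} {a : ℝ}
    (hfc : Continuous f) (hgc : Continuous g)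
    (hfd : ∀ t ∈ Iio a, HasDerivAt f (d t) t)
    (hgd : ∀ t ∈ Iio a, HasDerivAt g (d t) t)
    (ha : f a = g a) : ∀ t ∈ Iic a, f t = g t := by
  have key : ∀ u w : ℝ, w < a → u ≤ w → f u - g u = f w - g w := by
    intro u w hw huw
    have := constant_of_has_deriv_right_zero (f := fun t => f t - g t) (a := u) (b := w)
      ((hfc.sub hgc).continuousOn)
      (fun z hz => by
        have : HasDerivAt (fun t => f t - g t) 0 z := by
          simpa [Pi.sub_def] using (hfd z (lt_of_le_of_lt hz.2.le hw)).sub (hgd z (lt_of_le_of_lt hz.2.le hw))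
        exact this.hasDerivWithinAt) w (right_mem_Icc.2 huw)
    simpa using this.symm
  intro t ht
  rcases eq_or_lt_of_le (show t ≤ a from ht) with h | h
  · rw [h, ha]
  · have h1 : Tendsto (fun u => f u - g u) (nhdsWithin a (Iio a)) (nhds (f a - g a)) :=
      ((hfc.sub hgc).tendsto a).mono_left nhdsWithin_le_nhds
    have h2 : Tendsto (fun u => f u - g u) (nhdsWithin a (Iio a)) (nhds (f t - g t)) := by
      apply Tendsto.congr' _ tendsto_const_nhds
      filter_upwards [Ioo_mem_nhdsLT_of_mem (Set.right_mem_Ioc.2 h)] with u hu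
      exact (key t u hu.2 hu.1.le)
    have := tendsto_nhds_unique h1 h2
    rw [ha] at this
    linarith


lemma enorm2_pos {p : ℝ × ℝ} (h : p ≠ 0) : 0 < enorm2 p := by
  apply Real.sqrt_pos.2
  have h' : p.1 ≠ 0 ∨ p.2 ≠ 0 := by
    by_contra hcon
    push_neg at hcon
    exact h (Prod.ext_iff.2 ⟨hcon.1, hcon.2⟩)
  rcases h' with h' | h' <;> positivity

lemma enorm2_sq {p : ℝ × ℝ} : enorm2 p ^ 2 = p.1 ^ 2 + p.2 ^ 2 :=
  Real.sq_sqrt (by positivity)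

/-- The angular derivative in polar coordinates. -/
lemma theta_deriv (x v : ℝ → ℝ × ℝ) (θ : ℝ → ℝ)
    (hx0 : ∀ t, x t ≠ 0)
    (hx : ∀ t, HasDerivAt x (v t) t)
    (hθcont : Continuous θ)
    (hθ : ∀ t, x t = (enorm2 (x t) * Real.cos (θ t), enorm2 (x t) * Real.sin (θ t)))
    (t0 : ℝ) :
    HasDerivAt θ (((x t0).1 * (v t0).2 - (x t0).2 * (v t0).1) / enorm2 (x t0) ^ 2) t0 := by
  have hrpos : ∀ t, 0 < enorm2 (x t) := fun t => enorm2_pos (hx0 t)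
  set r : ℝ → ℝ := fun t => enorm2 (x t) with hrdef
  -- the "cross" function
  set N : ℝ → ℝ := fun t => (x t0).1 * (x t).2 - (x t0).2 * (x t).1 with hNdef
  set cross : ℝ → ℝ := fun t => N t / (r t0 * r t) with hcrossdef
  have hcross_eq : ∀ t, cross t = Real.sin (θ t - θ t0) := by
    intro t
    have h1 := hθ t; have h2 := hθ t0
    have e1 : (x t).1 = r t * Real.cos (θ t) := by rw [h1]
    have e2 : (x t).2 = r t * Real.sin (θ t) := by rw [h1]
    have e3 : (x t0).1 = r t0 * Real.cos (θ t0) := by rw [h2]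
    have e4 : (x t0).2 = r t0 * Real.sin (θ t0) := by rw [h2]
    rw [hcrossdef]
    simp only [hNdef, e1, e2, e3, e4, Real.sin_sub]
    field_simp [show r t ≠ 0 from (hrpos t).ne', show r t0 ≠ 0 from (hrpos t0).ne']
  -- derivative of cross at t0
  have hNd : HasDerivAt N ((x t0).1 * (v t0).2 - (x t0).2 * (v t0).1) t0 := by
    have h1 : HasDerivAt (fun t => (x t).1) (v t0).1 t0 := myHasDerivAt_fst (hx t0)
    have h2 : HasDerivAt (fun t => (x t).2) (v t0).2 t0 := myHasDerivAt_snd (hx t0)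
    simpa [Pi.sub_def] using ((h2.const_mul ((x t0).1)).sub (h1.const_mul ((x t0).2)))
  have hN0 : N t0 = 0 := by simp [hNdef]; ring
  have hrd0 : HasDerivAt (fun t => r t0 * r t)
      (r t0 * (((x t0).1 * (v t0).1 + (x t0).2 * (v t0).2) / r t0)) t0 := by
    have hq : HasDerivAt (fun t => (x t).1 ^ 2 + (x t).2 ^ 2)
        (2 * ((x t0).1 * (v t0).1 + (x t0).2 * (v t0).2)) t0 := by
      have h1 : HasDerivAt (fun t => (x t).1) (v t0).1 t0 := myHasDerivAt_fst (hx t0)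
      have h2 : HasDerivAt (fun t => (x t).2) (v t0).2 t0 := myHasDerivAt_snd (hx t0)
      have := (h1.pow 2).add (h2.pow 2)
      convert this using 1
      case e'_4 => rfl
      case e'_5 => rfl
      case e'_8 => rfl
      ring
    have hq0 : (0:ℝ) < (x t0).1 ^ 2 + (x t0).2 ^ 2 := by
      rw [← enorm2_sq]; exact pow_pos (hrpos t0) 2
    have hsqne : Real.sqrt ((x t0).1 ^ 2 + (x t0).2 ^ 2) ≠ 0 :=
      (Real.sqrt_pos.2 hq0).ne'
    have hs := (Real.hasDerivAt_sqrt hq0.ne').comp t0 hq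
    have : HasDerivAt r (((x t0).1 * (v t0).1 + (x t0).2 * (v t0).2) / r t0) t0 := by
      convert hs using 1
      case e'_4 => rfl
      case e'_5 => rfl
      case e'_8 => rfl
      show _ = _
      rw [hrdef]
      simp only [enorm2]
      field_simp
    exact this.const_mul (r t0)
  have hcrossd : HasDerivAt cross
      (((x t0).1 * (v t0).2 - (x t0).2 * (v t0).1) / (r t0 * r t0)) t0 := by
    have hd := hNd.div hrd0 (mul_pos (hrpos t0) (hrpos t0)).ne'
    convert hd using 1
    case e'_4 => rfl
    case e'_5 => rfl
    case e'_8 => rfl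
    rw [hN0]
    have : r t0 * r t0 ≠ 0 := (mul_pos (hrpos t0) (hrpos t0)).ne'
    field_simp [show r t0 ≠ 0 from (hrpos t0).ne']
    ring
  -- locally, θ t = θ t0 + arcsin (cross t)
  have hlocal : (fun t => θ t0 + Real.arcsin (cross t)) =ᶠ[nhds t0] θ := by
    have hcont : ContinuousAt (fun t => θ t - θ t0) t0 := by fun_prop
    have hev : ∀ᶠ t in nhds t0, |θ t - θ t0| < Real.pi / 2 := by
      have : Set.Ioo (-(Real.pi/2)) (Real.pi/2) ∈ nhds (θ t0 - θ t0) := by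
        rw [sub_self]
        exact Ioo_mem_nhds (by linarith [Real.pi_pos]) (by linarith [Real.pi_pos])
      filter_upwards [hcont.preimage_mem_nhds this] with t ht
      rw [abs_lt]; exact ⟨ht.1, ht.2⟩
    filter_upwards [hev] with t ht
    rw [hcross_eq t, Real.arcsin_sin (by rw [abs_lt] at ht; linarith) (by rw [abs_lt] at ht; linarith)]
    ring
  have harcsin : HasDerivAt (fun t => θ t0 + Real.arcsin (cross t))
      (((x t0).1 * (v t0).2 - (x t0).2 * (v t0).1) / r t0 ^ 2) t0 := by
    have hc0 : cross t0 = 0 := by rw [hcross_eq t0, sub_self, Real.sin_zero]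
    have ha := (Real.hasDerivAt_arcsin (x := cross t0) (by rw [hc0]; norm_num)
      (by rw [hc0]; norm_num)).comp t0 hcrossd
    have := ha.const_add (θ t0)
    convert this using 1
    case e'_4 => rfl
    case e'_5 => rfl
    case e'_8 => rfl
    rw [hc0]
    norm_num
    rw [pow_two]
  exact harcsin.congr_of_eventuallyEq hlocal.symm


lemma alg1 (σ A S R C β : ℝ) (hA : A ≠ 0) (hS : S ≠ 0) (hC : C ≠ 0) (hR : R ≠ 0) (hβ : β ≠ 0) :
    σ * (2/β) * (β/2 * A * S / (R * (A * S / C))) = σ * C / R := by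
  field_simp

lemma alg2 (σ A S R C β : ℝ) (hA : A ≠ 0) (hS : S ≠ 0) (hC : C ≠ 0) (hR : R ≠ 0) (hβ : β ≠ 0) :
    -(σ * (2/β) * (β/2 * A * S / (R * (A * -S / C)))) = σ * C / R := by
  field_simp

set_option maxHeartbeats 2000000 in
theorem aux_span
    (μ α : ℝ) (hμ : 0 < μ) (hα : 1 ≤ α) (hα' : α < 2)
    (r s θ : ℝ → ℝ) (c : ℝ) (hc : c ≠ 0)
    (hrpos : ∀ t, 0 < r t)
    (hrd : ∀ t, HasDerivAt r (s t / r t) t)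
    (hsd : ∀ t, HasDerivAt s (μ * (2 - α) / (α * r t ^ α)) t)
    (hs2 : ∀ t, s t ^ 2 + c ^ 2 = (2 * μ / α) * r t ^ ((2:ℝ) - α))
    (hθd : ∀ t, HasDerivAt θ (c / r t ^ 2) t) :
    ∃ θp θm : ℝ, Tendsto θ atTop (nhds θp) ∧ Tendsto θ atBot (nhds θm) ∧
      |θp - θm| = 2 * Real.pi / (2 - α) := by
  have hα0 : 0 < α := lt_of_lt_of_le one_pos hα
  have h2α : 0 < 2 - α := by linarith
  have hrapos : ∀ t, 0 < r t ^ α := fun t => Real.rpow_pos_of_pos (hrpos t) α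
  have hsd_pos : ∀ t, 0 < μ * (2 - α) / (α * r t ^ α) :=
    fun t => div_pos (mul_pos hμ h2α) (mul_pos hα0 (hrapos t))
  have hscont : Continuous s := continuous_iff_continuousAt.2 fun t => (hsd t).continuousAt
  have hrcont : Continuous r := continuous_iff_continuousAt.2 fun t => (hrd t).continuousAt
  have hsmono : StrictMono s := by
    apply strictMono_of_deriv_pos
    intro t
    rw [(hsd t).deriv]
    exact hsd_pos t
  -- existence of a zero of s
  obtain ⟨T, hsT⟩ : ∃ T, s T = 0 := by
    have hδid : ∀ δ : ℝ, ∀ t : ℝ, HasDerivAt (fun u => δ * u) δ t := by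
      intro δ t; simpa using (hasDerivAt_id t).const_mul δ
    have hneg : ∃ t1, s t1 < 0 := by
      by_contra hcon
      push_neg at hcon
      have hrm : Monotone r := by
        apply monotone_of_deriv_nonneg (fun t => (hrd t).differentiableAt)
        intro t; rw [(hrd t).deriv]
        exact div_nonneg (hcon t) (hrpos t).le
      set δ := μ * (2 - α) / (α * r 0 ^ α) with hδ
      have hδpos : 0 < δ := hsd_pos 0
      have hcmp : ∀ t ∈ Iic (0:ℝ), δ ≤ μ * (2 - α) / (α * r t ^ α) := by
        intro t ht
        apply div_le_div_of_nonneg_left (by positivity) (mul_pos hα0 (hrapos t))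
        have : r t ≤ r 0 := hrm ht
        have := Real.rpow_le_rpow (hrpos t).le this hα0.le
        nlinarith
      have hbound := deriv_compare_Iic (a := 0) hsd (hδid δ) hcmp
      set t1 := -(|s 0| + 1)/δ with ht1def
      have ht1 : t1 ≤ 0 := by
        rw [ht1def]
        apply div_nonpos_of_nonpos_of_nonneg _ hδpos.le
        have := abs_nonneg (s 0); linarith
      have hb := hbound t1 ht1
      have hδt1 : δ * t1 = -(|s 0| + 1) := by
        rw [ht1def]; field_simp
      have : s t1 < 0 := by
        have h1 : s 0 ≤ |s 0| := le_abs_self _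
        nlinarith
      exact absurd this (not_lt.2 (hcon t1))
    have hpos : ∃ t2, 0 < s t2 := by
      by_contra hcon
      push_neg at hcon
      have hrm : Antitone r := by
        apply antitone_of_deriv_nonpos (fun t => (hrd t).differentiableAt)
        intro t; rw [(hrd t).deriv]
        exact div_nonpos_of_nonpos_of_nonneg (hcon t) (hrpos t).le
      set δ := μ * (2 - α) / (α * r 0 ^ α) with hδ
      have hδpos : 0 < δ := hsd_pos 0
      have hcmp : ∀ t ∈ Ici (0:ℝ), δ ≤ μ * (2 - α) / (α * r t ^ α) := by
        intro t ht
        apply div_le_div_of_nonneg_left (by positivity) (mul_pos hα0 (hrapos t))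
        have : r t ≤ r 0 := hrm ht
        have := Real.rpow_le_rpow (hrpos t).le this hα0.le
        nlinarith
      have hbound := deriv_compare_Ici (a := 0) hsd (hδid δ) hcmp
      set t2 := (|s 0| + 1)/δ with ht2def
      have ht2 : (0:ℝ) ≤ t2 := by
        rw [ht2def]
        apply div_nonneg _ hδpos.le
        have := abs_nonneg (s 0); linarith
      have hb := hbound t2 ht2
      have hδt2 : δ * t2 = |s 0| + 1 := by
        rw [ht2def]; field_simp
      have : 0 < s t2 := by
        have h1 : -(|s 0|) ≤ s 0 := neg_abs_le _
        nlinarith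
      exact absurd this (not_lt.2 (hcon t2))
    obtain ⟨t1, h1⟩ := hneg
    obtain ⟨t2, h2⟩ := hpos
    have h12 : t1 ≤ t2 := le_of_lt (hsmono.lt_iff_lt.1 (h1.trans h2))
    obtain ⟨T, _, hT⟩ := intermediate_value_Icc h12 hscont.continuousOn ⟨h1.le, h2.le⟩
    exact ⟨T, hT⟩
  have hspos : ∀ t, T < t → 0 < s t := fun t ht => hsT ▸ hsmono ht
  have hsneg : ∀ t, t < T → s t < 0 := fun t ht => hsT ▸ hsmono ht
  have hkc : c ^ 2 = (2 * μ / α) * r T ^ ((2:ℝ) - α) := by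
    have := hs2 T; rw [hsT] at this; simpa using this
  have hrmono : StrictMonoOn r (Ici T) := by
    apply strictMonoOn_of_deriv_pos (convex_Ici T) hrcont.continuousOn
    intro t ht
    rw [interior_Ici] at ht
    rw [(hrd t).deriv]
    exact div_pos (hspos t ht) (hrpos t)
  have hranti : StrictAntiOn r (Iic T) := by
    apply strictAntiOn_of_deriv_neg (convex_Iic T) hrcont.continuousOn
    intro t ht
    rw [interior_Iic] at ht
    rw [(hrd t).deriv]
    exact div_neg_of_neg_of_pos (hsneg t ht) (hrpos t)
  have hrT : ∀ t, t ≠ T → r T < r t := by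
    intro t ht
    rcases lt_or_gt_of_ne ht with h | h
    · exact hranti h.le self_mem_Iic h
    · exact hrmono self_mem_Ici h.le h
  have hquadd : ∀ (a b t0 M : ℝ) (t : ℝ), M ≠ 0 →
      HasDerivAt (fun u => (a * (u - t0) + b * (u - t0)^2/2)/M) ((a + b * (t - t0))/M) t := by
    intro a b t0 M t hM
    have h1 : HasDerivAt (fun u : ℝ => u - t0) 1 t := (hasDerivAt_id t).sub_const t0
    have h2 := ((h1.const_mul a).add (((h1.pow 2).const_mul b).div_const 2)).div_const M
    convert h2 using 1
    case e'_4 => rfl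
    case e'_5 => rfl
    case e'_8 => rfl
    field_simp
    ring
  have hδid : ∀ δ : ℝ, ∀ t : ℝ, HasDerivAt (fun u => δ * u) δ t := by
    intro δ t; simpa using (hasDerivAt_id t).const_mul δ
  have hrtop : Tendsto r atTop atTop := by
    rw [tendsto_atTop]
    intro M0
    have hub : ∃ t1, T ≤ t1 ∧ M0 ≤ r t1 := by
      by_contra hcon
      push_neg at hcon
      set M := max M0 (r T) with hM
      clear_value M
      have hMr : ∀ t, T ≤ t → r t ≤ M := by
        intro t ht
        rcases eq_or_lt_of_le ht with h | h
        · rw [← h, hM]; exact le_max_right _ _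
        · exact le_trans (hcon t ht).le (hM ▸ le_max_left _ _)
      have hMpos : 0 < M := lt_of_lt_of_le (hrpos T) (hMr T le_rfl)
      set t0 := T + 1 with ht0
      clear_value t0
      have ht0T : T ≤ t0 := by rw [ht0]; linarith
      have hS0 : 0 < s t0 := hspos t0 (by rw [ht0]; linarith)
      set δ := μ * (2 - α) / (α * M ^ α) with hδ
      clear_value δ
      have hδpos : 0 < δ := by
        rw [hδ]
        exact div_pos (mul_pos hμ h2α) (mul_pos hα0 (Real.rpow_pos_of_pos hMpos α))
      have hcmp : ∀ t ∈ Ici t0, δ ≤ μ * (2 - α) / (α * r t ^ α) := by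
        intro t ht
        rw [hδ]
        apply div_le_div_of_nonneg_left (by positivity) (mul_pos hα0 (hrapos t))
        have h1 : r t ≤ M := hMr t (le_trans ht0T (mem_Ici.1 ht))
        have := Real.rpow_le_rpow (hrpos t).le h1 hα0.le
        nlinarith
      have hslb : ∀ t ∈ Ici t0, s t0 + δ * (t - t0) ≤ s t := by
        intro t ht
        have h9 := deriv_compare_Ici (a := t0) hsd (hδid δ) hcmp t ht
        nlinarith [h9]
      have hcmp2 : ∀ t ∈ Ici t0, (s t0 + δ * (t - t0))/M ≤ s t / r t := by
        intro t ht
        have hst := hslb t ht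
        have h1 : r t ≤ M := hMr t (le_trans ht0T (mem_Ici.1 ht))
        have htt0 : t0 ≤ t := mem_Ici.1 ht
        have hsnn : 0 ≤ s t := le_trans (by nlinarith) hst
        calc (s t0 + δ * (t - t0))/M ≤ s t / M := by
              rw [div_le_div_iff₀ hMpos hMpos]; nlinarith
          _ ≤ s t / r t := div_le_div_of_nonneg_left hsnn (hrpos t) h1
      have hrlb := deriv_compare_Ici (a := t0) hrd
        (fun u => hquadd (s t0) δ t0 M u hMpos.ne') hcmp2
      set K := 2 * M^2/δ + 1 with hK
      clear_value K
      have hKnn : (0:ℝ) ≤ 2 * M^2/δ := by positivity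
      have hK1 : 1 ≤ K := by rw [hK]; linarith
      have hmem : t0 + K ∈ Ici t0 := by rw [mem_Ici]; linarith
      have hthis := hrlb (t0 + K) hmem
      have hKexpr : (s t0 * (t0 + K - t0) + δ * (t0 + K - t0)^2/2)/M
          - (s t0 * (t0 - t0) + δ * (t0 - t0)^2/2)/M = (s t0 * K + δ * K^2/2)/M := by
        field_simp
        try ring
      rw [hKexpr] at hthis
      have hδK : δ * K = 2*M^2 + δ := by rw [hK]; field_simp [hδpos.ne']
      have hX : M * M < s t0 * K + δ * K^2/2 := by
        have h6 : δ * K^2 = (2*M^2 + δ)*K := by rw [pow_two, ← mul_assoc, hδK]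
        have hKpos : (0:ℝ) < K := by linarith
        have c1 : (2*M^2 + δ) * 1 ≤ (2*M^2 + δ)*K :=
          mul_le_mul_of_nonneg_left hK1 (by positivity)
        have c2 : 0 < s t0 * K := mul_pos hS0 hKpos
        nlinarith [h6, c1, c2, hδpos]
      have h7 : M < (s t0 * K + δ * K^2/2)/M := by
        rw [lt_div_iff₀ hMpos]; nlinarith [hX]
      have h8 := hMr (t0 + K) (by linarith)
      nlinarith [hrpos t0]
    obtain ⟨t1, ht1T, ht1⟩ := hub
    filter_upwards [eventually_ge_atTop t1] with t ht
    exact le_trans ht1 (hrmono.monotoneOn ht1T (le_trans ht1T ht) ht)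
  have hrbot : Tendsto r atBot atTop := by
    rw [tendsto_atTop]
    intro M0
    have hub : ∃ t1, t1 ≤ T ∧ M0 ≤ r t1 := by
      by_contra hcon
      push_neg at hcon
      set M := max M0 (r T) with hM
      clear_value M
      have hMr : ∀ t, t ≤ T → r t ≤ M := by
        intro t ht
        rcases eq_or_lt_of_le ht with h | h
        · rw [h, hM]; exact le_max_right _ _
        · exact le_trans (hcon t ht).le (hM ▸ le_max_left _ _)
      have hMpos : 0 < M := lt_of_lt_of_le (hrpos T) (hMr T le_rfl)
      set t0 := T - 1 with ht0
      clear_value t0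
      have ht0T : t0 ≤ T := by rw [ht0]; linarith
      have hS0 : s t0 < 0 := hsneg t0 (by rw [ht0]; linarith)
      set δ := μ * (2 - α) / (α * M ^ α) with hδ
      clear_value δ
      have hδpos : 0 < δ := by
        rw [hδ]
        exact div_pos (mul_pos hμ h2α) (mul_pos hα0 (Real.rpow_pos_of_pos hMpos α))
      have hcmp : ∀ t ∈ Iic t0, δ ≤ μ * (2 - α) / (α * r t ^ α) := by
        intro t ht
        rw [hδ]
        apply div_le_div_of_nonneg_left (by positivity) (mul_pos hα0 (hrapos t))
        have h1 : r t ≤ M := hMr t (le_trans (mem_Iic.1 ht) ht0T)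
        have := Real.rpow_le_rpow (hrpos t).le h1 hα0.le
        nlinarith
      have hsub : ∀ t ∈ Iic t0, s t ≤ s t0 + δ * (t - t0) := by
        intro t ht
        have h9 := deriv_compare_Iic (a := t0) hsd (hδid δ) hcmp t ht
        nlinarith [h9]
      have hcmp2 : ∀ t ∈ Iic t0, s t / r t ≤ (s t0 + δ * (t - t0))/M := by
        intro t ht
        have hst := hsub t ht
        have h1 : r t ≤ M := hMr t (le_trans (mem_Iic.1 ht) ht0T)
        have htt0 : t ≤ t0 := mem_Iic.1 ht
        have hsn : s t ≤ 0 := le_trans hst (by nlinarith)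
        calc s t / r t ≤ s t / M := by
              rw [div_le_div_iff₀ (hrpos t) hMpos]; nlinarith
          _ ≤ (s t0 + δ * (t - t0))/M := by
              rw [div_le_div_iff₀ hMpos hMpos]; nlinarith
      have hrlb := deriv_compare_Iic (a := t0)
        (fun u => hquadd (s t0) δ t0 M u hMpos.ne') hrd hcmp2
      set K := 2 * M^2/δ + 1 with hK
      clear_value K
      have hKnn : (0:ℝ) ≤ 2 * M^2/δ := by positivity
      have hK1 : 1 ≤ K := by rw [hK]; linarith
      have hmem : t0 - K ∈ Iic t0 := by rw [mem_Iic]; linarith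
      have hthis := hrlb (t0 - K) hmem
      have hKexpr : (s t0 * (t0 - K - t0) + δ * (t0 - K - t0)^2/2)/M
          - (s t0 * (t0 - t0) + δ * (t0 - t0)^2/2)/M = (s t0 * (-K) + δ * K^2/2)/M := by
        field_simp
        try ring
      rw [hKexpr] at hthis
      have hδK : δ * K = 2*M^2 + δ := by rw [hK]; field_simp [hδpos.ne']
      have hX : M * M < s t0 * (-K) + δ * K^2/2 := by
        have h6 : δ * K^2 = (2*M^2 + δ)*K := by rw [pow_two, ← mul_assoc, hδK]
        have hKpos : (0:ℝ) < K := by linarith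
        have c1 : (2*M^2 + δ) * 1 ≤ (2*M^2 + δ)*K :=
          mul_le_mul_of_nonneg_left hK1 (by positivity)
        have c2 : 0 < s t0 * (-K) := by nlinarith
        nlinarith [h6, c1, c2, hδpos]
      have h7 : M < (s t0 * (-K) + δ * K^2/2)/M := by
        rw [lt_div_iff₀ hMpos]; nlinarith [hX]
      have h8 := hMr (t0 - K) (by linarith)
      nlinarith [hrpos t0]
    obtain ⟨t1, ht1T, ht1⟩ := hub
    filter_upwards [eventually_le_atBot t1] with t ht
    exact le_trans ht1 (hranti.antitoneOn (le_trans ht ht1T) ht1T ht)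
  -- sign of c and the auxiliary function A
  set σ : ℝ := c / |c| with hσdef
  clear_value σ
  have habs : |c| ≠ 0 := abs_ne_zero.2 hc
  have hσc : σ * |c| = c := by rw [hσdef]; exact div_mul_cancel₀ c habs
  have hσabs : |σ| = 1 := by rw [hσdef, abs_div, abs_abs, div_self habs]
  set A : ℝ → ℝ := fun t => (r T / r t) ^ ((2 - α)/2) with hAdef
  have hAcont : Continuous A := by
    apply Continuous.rpow_const (continuous_const.div hrcont (fun t => (hrpos t).ne'))
    intro t; exact Or.inr (by linarith)
  have hA0 : ∀ t, 0 < A t :=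
    fun t => Real.rpow_pos_of_pos (div_pos (hrpos T) (hrpos t)) _
  have hA1 : ∀ t, t ≠ T → A t < 1 := by
    intro t ht
    apply Real.rpow_lt_one (div_pos (hrpos T) (hrpos t)).le
    · rw [div_lt_one (hrpos t)]; exact hrT t ht
    · linarith
  have hAT : A T = 1 := by
    rw [hAdef]; simp only [div_self (hrpos T).ne', Real.one_rpow]
  -- the square-root identity
  have hA2 : ∀ t, A t ^ 2 = r T ^ ((2:ℝ) - α) / r t ^ ((2:ℝ) - α) := by
    intro t
    have hq : (0:ℝ) ≤ r T / r t := (div_pos (hrpos T) (hrpos t)).le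
    have h1 : A t ^ 2 = (r T / r t) ^ ((2:ℝ) - α) := by
      rw [hAdef]
      rw [← Real.rpow_natCast ((r T / r t) ^ ((2 - α)/2)) 2, ← Real.rpow_mul hq]
      congr 1
      push_cast
      ring
    rw [h1, Real.div_rpow (hrpos T).le (hrpos t).le]
  have hsqrt : ∀ t, t ≠ T → Real.sqrt (1 - A t ^ 2) = A t * |s t| / |c| := by
    intro t ht
    have key : 1 - A t ^ 2 = (A t * |s t| / |c|) ^ 2 := by
      have h1 := hs2 t
      have hX : (0:ℝ) < r t ^ ((2:ℝ) - α) := Real.rpow_pos_of_pos (hrpos t) _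
      have hY : (0:ℝ) < r T ^ ((2:ℝ) - α) := Real.rpow_pos_of_pos (hrpos T) _
      rw [div_pow, mul_pow, sq_abs, sq_abs, hA2 t]
      field_simp [hX.ne']
      linear_combination (-(r T ^ ((2:ℝ) - α))) * h1 + (r t ^ ((2:ℝ) - α)) * hkc
    rw [key, Real.sqrt_sq
      (div_nonneg (mul_nonneg (hA0 t).le (abs_nonneg _)) (abs_nonneg _))]
  -- derivative of arccos ∘ A away from T
  have hsqrt_pos : ∀ t, t ≠ T → 0 < Real.sqrt (1 - A t ^ 2) := by
    intro t ht
    apply Real.sqrt_pos.2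
    have h1 := hA0 t
    have h2 := hA1 t ht
    nlinarith
  have hDarc : ∀ t, t ≠ T → HasDerivAt (fun u => Real.arccos (A u))
      (((2-α)/2) * A t * s t / (r t ^ 2 * Real.sqrt (1 - A t ^ 2))) t := by
    intro t ht
    have hqpos : 0 < r T / r t := div_pos (hrpos T) (hrpos t)
    have hq : HasDerivAt (fun u => r T / r u) (-(r T / r t) * (s t / r t) / r t) t := by
      have h0 := (hasDerivAt_const t (r T)).div (hrd t) (hrpos t).ne'
      convert h0 using 1
      case e'_4 => rfl
      case e'_5 => rfl
      case e'_8 => rfl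
      field_simp
      ring
    have hrp := (Real.hasDerivAt_rpow_const (x := r T / r t) (p := (2-α)/2)
      (Or.inl hqpos.ne')).comp t hq
    have hA1' : A t ≠ 1 := ne_of_lt (hA1 t ht)
    have hAm1 : A t ≠ -1 := by
      have := hA0 t; intro h; rw [h] at this; linarith
    have harc := (Real.hasDerivAt_arccos hAm1 hA1').comp t hrp
    convert harc using 1
    case e'_4 => rfl
    case e'_5 => rfl
    case e'_8 => rfl
    have hB : (r T / r t) ^ ((2-α)/2 - 1) * (r T / r t) = A t := by
      rw [← Real.rpow_add_one hqpos.ne']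
      rw [hAdef]
      norm_num
    have hW := hsqrt_pos t ht
    rw [← hB] at hW ⊢
    field_simp [hW.ne', (hrpos t).ne']
  -- the model functions
  have hGpd : ∀ t ∈ Ioi T, HasDerivAt (fun u => θ T + σ * (2/(2-α)) * Real.arccos (A u))
      (c / r t ^ 2) t := by
    intro t ht
    have ht' : t ≠ T := ne_of_gt ht
    have h := ((hDarc t ht').const_mul (σ * (2/(2-α)))).const_add (θ T)
    convert h using 1
    case e'_4 => rfl
    case e'_5 => rfl
    rw [hsqrt t ht', abs_of_pos (hspos t ht)]
    rw [alg1 σ (A t) (s t) (r t ^ 2) |c| (2 - α) (hA0 t).ne' (hspos t ht).ne' habs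
      (pow_ne_zero 2 (hrpos t).ne') h2α.ne', hσc]
  have hGmd : ∀ t ∈ Iio T, HasDerivAt (fun u => θ T - σ * (2/(2-α)) * Real.arccos (A u))
      (c / r t ^ 2) t := by
    intro t ht
    have ht' : t ≠ T := ne_of_lt ht
    have h := (((hDarc t ht').const_mul (σ * (2/(2-α)))).neg).const_add (θ T)
    have h' : HasDerivAt (fun u => θ T - σ * (2/(2-α)) * Real.arccos (A u))
        (-(σ * (2/(2-α)) * (((2-α)/2) * A t * s t / (r t ^ 2 * Real.sqrt (1 - A t ^ 2))))) t := by
      convert h using 2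
      case e'_4 => rfl
      case e'_5 => rfl
      case e'_8 => simp only [Pi.neg_apply, sub_eq_add_neg]
    convert h' using 1
    rw [hsqrt t ht', abs_of_neg (hsneg t ht)]
    rw [alg2 σ (A t) (s t) (r t ^ 2) |c| (2 - α) (hA0 t).ne' (hsneg t ht).ne habs
      (pow_ne_zero 2 (hrpos t).ne') h2α.ne', hσc]
  have hGcont : Continuous (fun u => Real.arccos (A u)) := Real.continuous_arccos.comp hAcont
  have hθp : ∀ t ∈ Ici T, θ t = θ T + σ * (2/(2-α)) * Real.arccos (A t) := by
    apply eq_on_Ici (d := fun t => c / r t ^ 2) (continuous_iff_continuousAt.2 fun t => (hθd t).continuousAt)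
      (continuous_const.add ((continuous_const.mul hGcont)))
      (fun t _ => hθd t) hGpd
    show θ T = θ T + σ * (2/(2-α)) * Real.arccos (A T)
    rw [hAT, Real.arccos_one]; ring
  have hθm : ∀ t ∈ Iic T, θ t = θ T - σ * (2/(2-α)) * Real.arccos (A t) := by
    apply eq_on_Iic (d := fun t => c / r t ^ 2) (continuous_iff_continuousAt.2 fun t => (hθd t).continuousAt)
      (continuous_const.sub ((continuous_const.mul hGcont)))
      (fun t _ => hθd t) hGmd
    show θ T = θ T - σ * (2/(2-α)) * Real.arccos (A T)
    rw [hAT, Real.arccos_one]; ring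
  -- limits
  have hp2 : (0:ℝ) < (2-α)/2 := by linarith
  have hAtop : Tendsto A atTop (nhds 0) := by
    have h1 : Tendsto (fun t => r T / r t) atTop (nhds 0) :=
      tendsto_const_nhds.div_atTop hrtop
    have h2 := ((Real.continuousAt_rpow_const 0 ((2-α)/2) (Or.inr hp2.le)).tendsto).comp h1
    simpa [Real.zero_rpow hp2.ne', Function.comp_def] using h2
  have hAbot : Tendsto A atBot (nhds 0) := by
    have h1 : Tendsto (fun t => r T / r t) atBot (nhds 0) :=
      tendsto_const_nhds.div_atTop hrbot
    have h2 := ((Real.continuousAt_rpow_const 0 ((2-α)/2) (Or.inr hp2.le)).tendsto).comp h1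
    simpa [Real.zero_rpow hp2.ne', Function.comp_def] using h2
  refine ⟨θ T + σ * (2/(2-α)) * (Real.pi/2), θ T - σ * (2/(2-α)) * (Real.pi/2), ?_, ?_, ?_⟩
  · have h1 : Tendsto (fun t => θ T + σ * (2/(2-α)) * Real.arccos (A t)) atTop
        (nhds (θ T + σ * (2/(2-α)) * Real.arccos 0)) :=
      tendsto_const_nhds.add (tendsto_const_nhds.mul ((Real.continuous_arccos.tendsto 0).comp hAtop))
    rw [Real.arccos_zero] at h1
    apply h1.congr'
    filter_upwards [Ici_mem_atTop T] with t ht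
    exact (hθp t ht).symm
  · have h1 : Tendsto (fun t => θ T - σ * (2/(2-α)) * Real.arccos (A t)) atBot
        (nhds (θ T - σ * (2/(2-α)) * Real.arccos 0)) :=
      tendsto_const_nhds.sub (tendsto_const_nhds.mul ((Real.continuous_arccos.tendsto 0).comp hAbot))
    rw [Real.arccos_zero] at h1
    apply h1.congr'
    filter_upwards [Iic_mem_atBot T] with t ht
    exact (hθm t ht).symm
  · have he : θ T + σ * (2/(2-α)) * (Real.pi/2) - (θ T - σ * (2/(2-α)) * (Real.pi/2))
        = σ * ((2/(2-α)) * Real.pi) := by ring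
    rw [he, abs_mul, hσabs, one_mul,
      abs_of_pos (mul_pos (div_pos two_pos h2α) Real.pi_pos)]
    field_simp

theorem parabolic_angular_span
    (μ α : ℝ) (hμ : 0 < μ) (hα : 1 ≤ α) (hα' : α < 2)
    (x v : ℝ → ℝ × ℝ) (θ : ℝ → ℝ) (c : ℝ) (hc : c ≠ 0)
    (hx0 : ∀ t, x t ≠ 0)
    (hx : ∀ t, HasDerivAt x (v t) t)
    (hv : ∀ t, HasDerivAt v (-(μ / enorm2 (x t) ^ (α + 2)) • x t) t)
    (henergy : ∀ t, (1 / 2) * ((v t).1 ^ 2 + (v t).2 ^ 2) = μ / (α * enorm2 (x t) ^ α))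
    (hmom : ∀ t, (x t).1 * (v t).2 - (x t).2 * (v t).1 = c)
    (hθcont : Continuous θ)
    (hθ : ∀ t, x t = (enorm2 (x t) * Real.cos (θ t), enorm2 (x t) * Real.sin (θ t))) :
    ∃ θp θm : ℝ,
      Tendsto θ atTop (nhds θp) ∧ Tendsto θ atBot (nhds θm) ∧
      |θp - θm| = 2 * Real.pi / (2 - α) := by
  have hα0 : 0 < α := lt_of_lt_of_le one_pos hα
  have hrpos : ∀ t, 0 < enorm2 (x t) := fun t => enorm2_pos (hx0 t)
  have hrapos : ∀ t, (0:ℝ) < enorm2 (x t) ^ α :=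
    fun t => Real.rpow_pos_of_pos (hrpos t) α
  have hv2 : ∀ t, (v t).1 ^ 2 + (v t).2 ^ 2 = 2 * μ / (α * enorm2 (x t) ^ α) := by
    intro t
    have h := henergy t
    have hden : α * enorm2 (x t) ^ α ≠ 0 := (mul_pos hα0 (hrapos t)).ne'
    field_simp at h ⊢
    linarith
  have hrd : ∀ t, HasDerivAt (fun u => enorm2 (x u))
      (((x t).1 * (v t).1 + (x t).2 * (v t).2) / enorm2 (x t)) t := by
    intro t
    have h1 := myHasDerivAt_fst (hx t)
    have h2 := myHasDerivAt_snd (hx t)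
    have hq : HasDerivAt (fun u => (x u).1 ^ 2 + (x u).2 ^ 2)
        (2 * ((x t).1 * (v t).1 + (x t).2 * (v t).2)) t := by
      have := (h1.pow 2).add (h2.pow 2)
      convert this using 1
      case e'_4 => rfl
      case e'_5 => rfl
      case e'_8 => rfl
      ring
    have hq0 : (0:ℝ) < (x t).1 ^ 2 + (x t).2 ^ 2 := by
      rw [← enorm2_sq]; exact pow_pos (hrpos t) 2
    have hs := (Real.hasDerivAt_sqrt hq0.ne').comp t hq
    convert hs using 1
    case e'_4 => rfl
    case e'_5 => rfl
    case e'_8 => rfl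
    show _ = _
    simp only [enorm2]
    have hsq : Real.sqrt ((x t).1 ^ 2 + (x t).2 ^ 2) ≠ 0 := (Real.sqrt_pos.2 hq0).ne'
    field_simp
  have hsd : ∀ t, HasDerivAt (fun u => (x u).1 * (v u).1 + (x u).2 * (v u).2)
      (μ * (2 - α) / (α * enorm2 (x t) ^ α)) t := by
    intro t
    have h1 := myHasDerivAt_fst (hx t)
    have h2 := myHasDerivAt_snd (hx t)
    have h3 := myHasDerivAt_fst (hv t)
    have h4 := myHasDerivAt_snd (hv t)
    have hd := (h1.mul h3).add (h2.mul h4)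
    convert hd using 1
    case e'_4 => rfl
    case e'_5 => rfl
    case e'_8 => rfl
    have ha1 : (-(μ / enorm2 (x t) ^ (α + 2)) • x t).1
        = -(μ / enorm2 (x t) ^ (α + 2)) * (x t).1 := rfl
    have ha2 : (-(μ / enorm2 (x t) ^ (α + 2)) • x t).2
        = -(μ / enorm2 (x t) ^ (α + 2)) * (x t).2 := rfl
    rw [ha1, ha2]
    have hsplit : enorm2 (x t) ^ (α + 2) = enorm2 (x t) ^ α * enorm2 (x t) ^ 2 := by
      rw [Real.rpow_add (hrpos t)]
      rw [show (2:ℝ) = ((2:ℕ):ℝ) by norm_num, Real.rpow_natCast]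
    rw [hsplit]
    have hP : enorm2 (x t) ^ α ≠ 0 := (hrapos t).ne'
    have hQ : enorm2 (x t) ^ 2 ≠ 0 := pow_ne_zero 2 (hrpos t).ne'
    have e1 : (x t).1 * (-(μ / (enorm2 (x t) ^ α * enorm2 (x t) ^ 2)) * (x t).1)
        + (x t).2 * (-(μ / (enorm2 (x t) ^ α * enorm2 (x t) ^ 2)) * (x t).2)
        = -(μ / enorm2 (x t) ^ α) := by
      rw [show (x t).1 * (-(μ / (enorm2 (x t) ^ α * enorm2 (x t) ^ 2)) * (x t).1)
          + (x t).2 * (-(μ / (enorm2 (x t) ^ α * enorm2 (x t) ^ 2)) * (x t).2)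
          = -(μ / (enorm2 (x t) ^ α * enorm2 (x t) ^ 2)) * ((x t).1 ^ 2 + (x t).2 ^ 2)
        from by ring, ← enorm2_sq]
      field_simp [(hrpos t).ne']
    calc μ * (2 - α) / (α * enorm2 (x t) ^ α)
        = 2 * μ / (α * enorm2 (x t) ^ α) + -(μ / enorm2 (x t) ^ α) := by
          field_simp
          ring
      _ = ((v t).1 ^ 2 + (v t).2 ^ 2)
          + ((x t).1 * (-(μ / (enorm2 (x t) ^ α * enorm2 (x t) ^ 2)) * (x t).1)
          + (x t).2 * (-(μ / (enorm2 (x t) ^ α * enorm2 (x t) ^ 2)) * (x t).2)) := by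
          rw [hv2 t, e1]
      _ = (v t).1 * (v t).1 + (x t).1 * (-(μ / (enorm2 (x t) ^ α * enorm2 (x t) ^ 2)) * (x t).1)
          + ((v t).2 * (v t).2 + (x t).2 * (-(μ / (enorm2 (x t) ^ α * enorm2 (x t) ^ 2)) * (x t).2)) := by
          ring
  have hs2 : ∀ t, ((x t).1 * (v t).1 + (x t).2 * (v t).2) ^ 2 + c ^ 2
      = (2 * μ / α) * enorm2 (x t) ^ ((2:ℝ) - α) := by
    intro t
    have hl : ((x t).1 * (v t).1 + (x t).2 * (v t).2) ^ 2
        + ((x t).1 * (v t).2 - (x t).2 * (v t).1) ^ 2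
        = ((x t).1 ^ 2 + (x t).2 ^ 2) * ((v t).1 ^ 2 + (v t).2 ^ 2) := by ring
    rw [hmom t, hv2 t, ← enorm2_sq] at hl
    rw [hl]
    have hsplit : enorm2 (x t) ^ ((2:ℝ) - α) = enorm2 (x t) ^ 2 / enorm2 (x t) ^ α := by
      rw [Real.rpow_sub (hrpos t)]
      rw [show (2:ℝ) = ((2:ℕ):ℝ) by norm_num, Real.rpow_natCast]
    rw [hsplit]
    have hP : enorm2 (x t) ^ α ≠ 0 := (hrapos t).ne'
    field_simp
  have hθd : ∀ t, HasDerivAt θ (c / enorm2 (x t) ^ 2) t := by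
    intro t
    have := theta_deriv x v θ hx0 hx hθcont hθ t
    rwa [hmom t] at this
  exact aux_span μ α hμ hα hα' (fun t => enorm2 (x t))
    (fun t => (x t).1 * (v t).1 + (x t).2 * (v t).2) θ c hc hrpos hrd hsd hs2 hθd
end

section
/- Let α ∈ [1,2), μ > 0, and let x : ℝ → ℝ² \ {0} be an entire zero-energy solution of ẍ = -μ x/|x|^{α+2} with nonzero angular momentum. Then, with r(t) = |x(t)| and γ = (√(μ/(2α))(2+α))^{2/(2+α)}, one has r(t)/|t|^{2/(2+α)} → γ as |t| → +∞. -/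
open Filter

lemma mono_aux (f f' : ℝ → ℝ) (hf : ∀ t, HasDerivAt f (f' t) t) (T b : ℝ)
    (hb : ∀ s, T ≤ s → b ≤ f' s) : ∀ t, T ≤ t → f T + b * (t - T) ≤ f t := by
  intro t ht
  have hg : ∀ s, HasDerivAt (fun s => f s - b * s) (f' s - b) s := by
    intro s
    exact ((hf s).sub ((hasDerivAt_id s).const_mul b)).congr_deriv (by ring)
  have hmono : MonotoneOn (fun s => f s - b * s) (Set.Ici T) := by
    apply monotoneOn_of_deriv_nonneg (convex_Ici T)
    · exact fun s _ => ((hg s).continuousAt).continuousWithinAt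
    · exact fun s _ => ((hg s).differentiableAt).differentiableWithinAt
    · intro s hs
      rw [(hg s).deriv]
      have hsT : T ≤ s := le_of_lt (by simpa [interior_Ici] using hs)
      linarith [hb s hsT]
  have := hmono Set.self_mem_Ici (Set.mem_Ici.2 ht) ht
  dsimp at this
  linarith

lemma anti_aux (f f' : ℝ → ℝ) (hf : ∀ t, HasDerivAt f (f' t) t) (T b : ℝ)
    (hb : ∀ s, T ≤ s → f' s ≤ b) : ∀ t, T ≤ t → f t ≤ f T + b * (t - T) := by
  intro t ht
  have := mono_aux (fun s => -f s) (fun s => -f' s) (fun s => (hf s).neg) T (-b)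
    (fun s hs => neg_le_neg (hb s hs)) t ht
  linarith

lemma div_tendsto (f f' : ℝ → ℝ) (k : ℝ) (hf : ∀ t, HasDerivAt f (f' t) t)
    (h : Tendsto f' atTop (nhds k)) : Tendsto (fun t => f t / t) atTop (nhds k) := by
  rw [Metric.tendsto_atTop]
  intro ε hε
  obtain ⟨T₀, hT₀⟩ := (Metric.tendsto_atTop.1 h) (ε/4) (by linarith)
  set T := max T₀ 0 with hT
  have hT0 : (0:ℝ) ≤ T := le_max_right _ _
  have hbound : ∀ s, T ≤ s → |f' s - k| ≤ ε/4 := by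
    intro s hs
    have := hT₀ s (le_trans (le_max_left _ _) hs)
    rw [Real.dist_eq] at this; linarith
  have hup : ∀ t, T ≤ t → f t ≤ f T + (k + ε/4) * (t - T) :=
    anti_aux f f' hf T _ (fun s hs => by
      have := abs_le.1 (hbound s hs); linarith [this.2])
  have hlo : ∀ t, T ≤ t → f T + (k - ε/4) * (t - T) ≤ f t :=
    mono_aux f f' hf T _ (fun s hs => by
      have := abs_le.1 (hbound s hs); linarith [this.1])
  set Cst := |f T - k * T| with hC
  have hC0 : 0 ≤ Cst := abs_nonneg _
  refine ⟨max (T + 1) (4 * Cst / ε + 1), ?_⟩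
  intro t ht
  have ht1 : T + 1 ≤ t := le_trans (le_max_left _ _) ht
  have ht2 : 4 * Cst / ε + 1 ≤ t := le_trans (le_max_right _ _) ht
  have htpos : 0 < t := by linarith
  have htT : T ≤ t := by linarith
  have h1 := hup t htT
  have h2 := hlo t htT
  have key : |f t - k * t| ≤ Cst + ε/4 * t := by
    have e : f t - k * t = (f T - k * T) + (f t - f T - k * (t - T)) := by ring
    have b1 : |f t - f T - k * (t - T)| ≤ ε/4 * (t - T) := by
      rw [abs_le]; constructor <;> nlinarith
    calc |f t - k*t| = |(f T - k*T) + (f t - f T - k*(t-T))| := by rw [← e]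
      _ ≤ |f T - k*T| + |f t - f T - k*(t-T)| := abs_add_le _ _
      _ ≤ Cst + ε/4*(t-T) := by rw [hC]; linarith
      _ ≤ Cst + ε/4 * t := by nlinarith
  rw [Real.dist_eq]
  have e2 : f t / t - k = (f t - k * t) / t := by field_simp
  rw [e2, abs_div, abs_of_pos htpos, div_lt_iff₀ htpos]
  have h4 : 4 * Cst ≤ (t - 1) * ε := by
    rw [← div_le_iff₀ hε]; linarith
  nlinarith [key]

lemma radial_atTop (A B C β : ℝ) (hA : 0 < A) (hC : 0 < C) (hβ : 0 < β) (hβ2 : β < 2)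
    (q u : ℝ → ℝ) (hq0 : ∀ t, 0 < q t)
    (hq' : ∀ t, HasDerivAt q (2 * u t) t)
    (hu' : ∀ t, HasDerivAt u (C * q t ^ (-(β/2)) : ℝ) t)
    (hlag : ∀ t, u t ^ 2 = A * q t ^ (((2-β)/2 : ℝ)) - B) :
    Tendsto (fun t => Real.sqrt (q t) / |t| ^ ((2:ℝ)/(2+β))) atTop
      (nhds (((2+β)/2 * Real.sqrt A) ^ ((2:ℝ)/(2+β)))) := by
  have h2β : (0:ℝ) < 2 + β := by linarith
  set k : ℝ := (2+β)/2 * Real.sqrt A with hk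
  have hsA : 0 < Real.sqrt A := Real.sqrt_pos.2 hA
  have hkpos : 0 < k := mul_pos (by linarith) hsA
  -- step 1 : some point with positive u
  have hstep1 : ∃ t₀, 0 < u t₀ := by
    by_contra hcon
    push_neg at hcon
    have hqle : ∀ t, 0 ≤ t → q t ≤ q 0 := by
      intro t ht
      have := anti_aux q (fun t => 2 * u t) hq' 0 0
        (fun s _ => by have := hcon s; show (2:ℝ) * u s ≤ 0; linarith) t ht
      linarith [this]
    set δ := C * q 0 ^ (-(β/2) : ℝ) with hδ
    have hδ0 : 0 < δ := mul_pos hC (Real.rpow_pos_of_pos (hq0 0) _)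
    have hge : ∀ s, (0:ℝ) ≤ s → δ ≤ C * q s ^ (-(β/2) : ℝ) := by
      intro s hs
      have h1 : q 0 ^ (-(β/2) : ℝ) ≤ q s ^ (-(β/2) : ℝ) :=
        Real.rpow_le_rpow_of_nonpos (hq0 s) (hqle s hs) (by linarith)
      exact mul_le_mul_of_nonneg_left h1 hC.le
    have ht0 : (0:ℝ) ≤ (1 - u 0)/δ := by
      apply div_nonneg _ hδ0.le
      have := hcon 0; linarith
    have hm := mono_aux u (fun t => C * q t ^ (-(β/2) : ℝ)) hu' 0 δ hge ((1 - u 0)/δ) ht0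
    have heq : δ * ((1 - u 0)/δ - 0) = 1 - u 0 := by field_simp; ring
    have := hcon ((1 - u 0)/δ)
    rw [heq] at hm
    linarith
  obtain ⟨t₀, hu₀⟩ := hstep1
  have humono : ∀ t, t₀ ≤ t → u t₀ ≤ u t := by
    intro t ht
    have := mono_aux u _ hu' t₀ 0
      (fun s _ => (mul_pos hC (Real.rpow_pos_of_pos (hq0 s) _)).le) t ht
    linarith [this]
  have hqgrow : ∀ t, t₀ ≤ t → q t₀ + 2 * u t₀ * (t - t₀) ≤ q t :=
    mono_aux q _ hq' t₀ (2 * u t₀) (fun s hs => by have := humono s hs; show (2:ℝ) * u t₀ ≤ 2 * u s; linarith)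
  have hqtop : Tendsto q atTop atTop := by
    apply tendsto_atTop_mono' atTop
      (eventually_atTop.2 ⟨t₀, fun t ht => hqgrow t ht⟩)
    apply tendsto_atTop_add_const_left
    have h1 : Tendsto (fun t : ℝ => t - t₀) atTop atTop :=
      tendsto_atTop_add_const_right _ _ tendsto_id
    exact h1.const_mul_atTop (by linarith)
  have hzlim : Tendsto (fun t => q t ^ ((β-2)/2 : ℝ)) atTop (nhds 0) := by
    have h1 : Tendsto (fun y : ℝ => y ^ ((β-2)/2 : ℝ)) atTop (nhds 0) := by
      have h2 := tendsto_rpow_neg_atTop (y := (2-β)/2) (by linarith)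
      simpa [show -((2-β)/2) = (β-2)/2 by ring] using h2
    exact h1.comp hqtop
  have hw' : ∀ t, HasDerivAt (fun t => q t ^ ((2+β)/4 : ℝ))
      ((2+β)/2 * (u t * q t ^ ((β-2)/4 : ℝ))) t := by
    intro t
    have h1 := (hq' t).rpow_const (p := (2+β)/4) (Or.inl (hq0 t).ne')
    have e : ((2+β)/4 - 1 : ℝ) = (β-2)/4 := by ring
    rw [e] at h1
    convert h1 using 1
    ring
  have hweq : ∀ t, t₀ ≤ t →
      u t * q t ^ ((β-2)/4 : ℝ) = Real.sqrt (A - B * q t ^ ((β-2)/2 : ℝ)) := by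
    intro t ht
    have hut : 0 < u t := lt_of_lt_of_le hu₀ (humono t ht)
    have h1 : u t = Real.sqrt (A * q t ^ (((2-β)/2 : ℝ)) - B) := by
      rw [← hlag t, Real.sqrt_sq hut.le]
    have h2 : q t ^ ((β-2)/4 : ℝ) = Real.sqrt (q t ^ ((β-2)/2 : ℝ)) := by
      rw [show ((β-2)/4 : ℝ) = ((β-2)/2) * (1/2) by ring,
        Real.rpow_mul (hq0 t).le, Real.sqrt_eq_rpow]
    have hnn : (0:ℝ) ≤ A * q t ^ (((2-β)/2 : ℝ)) - B := by
      rw [← hlag t]; positivity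
    rw [h1, h2, ← Real.sqrt_mul hnn]
    congr 1
    have h3 : q t ^ (((2-β)/2 : ℝ)) * q t ^ ((β-2)/2 : ℝ) = 1 := by
      rw [← Real.rpow_add (hq0 t), show ((2-β)/2 + (β-2)/2 : ℝ) = 0 by ring,
        Real.rpow_zero]
    linear_combination A * h3
  have hw'lim : Tendsto (fun t => (2+β)/2 * (u t * q t ^ ((β-2)/4 : ℝ))) atTop (nhds k) := by
    have h2 : Tendsto (fun t => A - B * q t ^ ((β-2)/2 : ℝ)) atTop (nhds A) := by
      have := (tendsto_const_nhds (x := A) (f := atTop (α := ℝ))).sub (hzlim.const_mul B)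
      simpa using this
    have h3 := (Real.continuous_sqrt.tendsto A).comp h2
    have h1 : Tendsto (fun t => (2+β)/2 * Real.sqrt (A - B * q t ^ ((β-2)/2 : ℝ)))
        atTop (nhds k) := by
      simpa [hk] using h3.const_mul ((2+β)/2)
    refine Tendsto.congr' ?_ h1
    filter_upwards [eventually_ge_atTop t₀] with t ht
    rw [hweq t ht]
  have hdiv := div_tendsto _ _ k hw' hw'lim
  have hcont : ContinuousAt (fun y : ℝ => y ^ ((2:ℝ)/(2+β))) k :=
    Real.continuousAt_rpow_const _ _ (Or.inl hkpos.ne')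
  have hfinal := hcont.tendsto.comp hdiv
  refine Tendsto.congr' ?_ hfinal
  filter_upwards [eventually_ge_atTop (1:ℝ)] with t ht
  have ht0 : 0 < t := by linarith
  show (q t ^ ((2+β)/4 : ℝ) / t) ^ ((2:ℝ)/(2+β)) = Real.sqrt (q t) / |t| ^ ((2:ℝ)/(2+β))
  rw [Real.div_rpow (Real.rpow_nonneg (hq0 t).le _) ht0.le, abs_of_pos ht0]
  congr 1
  rw [← Real.rpow_mul (hq0 t).le,
    show ((2+β)/4 * (2/(2+β)) : ℝ) = 1/2 by field_simp; ring,
    ← Real.sqrt_eq_rpow]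

theorem parabolic_radial_asymptotics
    (μ α : ℝ) (hμ : 0 < μ) (hα : 1 ≤ α) (hα' : α < 2)
    (x v : ℝ → ℝ × ℝ) (c : ℝ) (hc : c ≠ 0)
    (hx0 : ∀ t, x t ≠ 0)
    (hx : ∀ t, HasDerivAt x (v t) t)
    (hv : ∀ t, HasDerivAt v (-(μ / enorm2 (x t) ^ (α + 2)) • x t) t)
    (henergy : ∀ t, (1 / 2) * ((v t).1 ^ 2 + (v t).2 ^ 2) = μ / (α * enorm2 (x t) ^ α))
    (hmom : ∀ t, (x t).1 * (v t).2 - (x t).2 * (v t).1 = c)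
    (γ : ℝ) (hγ : γ = (Real.sqrt (μ / (2 * α)) * (2 + α)) ^ ((2:ℝ) / (2 + α))) :
    Tendsto (fun t => enorm2 (x t) / |t| ^ ((2:ℝ) / (2 + α))) atTop (nhds γ) ∧
    Tendsto (fun t => enorm2 (x t) / |t| ^ ((2:ℝ) / (2 + α))) atBot (nhds γ) := by
  have hα0 : 0 < α := by linarith
  have hq0 : ∀ t, 0 < (x t).1 ^ 2 + (x t).2 ^ 2 := by
    intro t
    have hor : (x t).1 ≠ 0 ∨ (x t).2 ≠ 0 := by
      by_contra hcon
      push_neg at hcon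
      exact hx0 t (Prod.ext_iff.2 ⟨by simpa using hcon.1, by simpa using hcon.2⟩)
    rcases hor with h | h
    · nlinarith [sq_nonneg (x t).2, pow_pos (abs_pos.2 h) 2, sq_abs (x t).1]
    · nlinarith [sq_nonneg (x t).1, pow_pos (abs_pos.2 h) 2, sq_abs (x t).2]
  have henorm_pow : ∀ t (b : ℝ),
      enorm2 (x t) ^ b = ((x t).1 ^ 2 + (x t).2 ^ 2) ^ (b/2 : ℝ) := by
    intro t b
    show Real.sqrt ((x t).1 ^ 2 + (x t).2 ^ 2) ^ b = _
    rw [Real.sqrt_eq_rpow, ← Real.rpow_mul (hq0 t).le]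
    congr 1
    ring
  -- component derivatives
  have hx1 : ∀ t, HasDerivAt (fun s => (x s).1) ((v t).1) t := by
    intro t
    exact (ContinuousLinearMap.fst ℝ ℝ ℝ).hasFDerivAt.comp_hasDerivAt t (hx t)
  have hx2 : ∀ t, HasDerivAt (fun s => (x s).2) ((v t).2) t := by
    intro t
    exact (ContinuousLinearMap.snd ℝ ℝ ℝ).hasFDerivAt.comp_hasDerivAt t (hx t)
  have hv1 : ∀ t, HasDerivAt (fun s => (v s).1)
      (-(μ / enorm2 (x t) ^ (α + 2)) * (x t).1) t := by
    intro t
    have := (ContinuousLinearMap.fst ℝ ℝ ℝ).hasFDerivAt.comp_hasDerivAt t (hv t)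
    simpa [Function.comp_def, Prod.smul_fst, smul_eq_mul] using this
  have hv2 : ∀ t, HasDerivAt (fun s => (v s).2)
      (-(μ / enorm2 (x t) ^ (α + 2)) * (x t).2) t := by
    intro t
    have := (ContinuousLinearMap.snd ℝ ℝ ℝ).hasFDerivAt.comp_hasDerivAt t (hv t)
    simpa [Function.comp_def, Prod.smul_snd, smul_eq_mul] using this
  -- q' = 2u
  have hq' : ∀ t, HasDerivAt (fun s => (x s).1 ^ 2 + (x s).2 ^ 2)
      (2 * ((x t).1 * (v t).1 + (x t).2 * (v t).2)) t := by
    intro t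
    have := ((hx1 t).pow 2).add ((hx2 t).pow 2)
    exact this.congr_deriv (by ring)
  -- speed squared
  have hspeed : ∀ t, (v t).1 ^ 2 + (v t).2 ^ 2
      = 2*μ/α * ((x t).1 ^ 2 + (x t).2 ^ 2) ^ (-(α/2) : ℝ) := by
    intro t
    have h := henergy t
    rw [henorm_pow t α] at h
    rw [Real.rpow_neg (hq0 t).le]
    set Q := ((x t).1 ^ 2 + (x t).2 ^ 2) ^ (α/2 : ℝ) with hQdef
    have hQ : (0:ℝ) < Q := Real.rpow_pos_of_pos (hq0 t) _
    have e : 2*μ/α * Q⁻¹ = 2 * (μ/(α*Q)) := by field_simp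
    rw [e]
    linarith
  -- u' = C q^{-α/2}
  have hu' : ∀ t, HasDerivAt (fun s => (x s).1 * (v s).1 + (x s).2 * (v s).2)
      (μ*(2-α)/α * ((x t).1 ^ 2 + (x t).2 ^ 2) ^ (-(α/2) : ℝ)) t := by
    intro t
    have h := ((hx1 t).mul (hv1 t)).add ((hx2 t).mul (hv2 t))
    refine h.congr_deriv (Eq.symm ?_)
    have e2 : μ / enorm2 (x t) ^ (α+2) * ((x t).1 ^ 2 + (x t).2 ^ 2)
        = μ * ((x t).1 ^ 2 + (x t).2 ^ 2) ^ (-(α/2) : ℝ) := by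
      rw [henorm_pow t (α+2), show ((α+2)/2 : ℝ) = α/2 + 1 by ring,
        Real.rpow_add (hq0 t), Real.rpow_one, Real.rpow_neg (hq0 t).le,
        ← div_div, div_mul_cancel₀ _ (hq0 t).ne']
      exact div_eq_mul_inv μ _
    have h3 := hspeed t
    have hco : μ*(2-α)/α = 2*μ/α - μ := by field_simp
    rw [hco]
    linear_combination e2 - h3
  -- Lagrange identity
  have hlag : ∀ t, ((x t).1 * (v t).1 + (x t).2 * (v t).2) ^ 2
      = 2*μ/α * ((x t).1 ^ 2 + (x t).2 ^ 2) ^ (((2-α)/2 : ℝ)) - c^2 := by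
    intro t
    have hm := hmom t
    have hs := hspeed t
    have hid : ((x t).1 * (v t).1 + (x t).2 * (v t).2) ^ 2 + c^2
        = ((x t).1 ^ 2 + (x t).2 ^ 2) * ((v t).1 ^ 2 + (v t).2 ^ 2) := by
      rw [← hm]; ring
    have hmul : ((x t).1 ^ 2 + (x t).2 ^ 2) *
        ((x t).1 ^ 2 + (x t).2 ^ 2) ^ (-(α/2) : ℝ)
        = ((x t).1 ^ 2 + (x t).2 ^ 2) ^ (((2-α)/2 : ℝ)) := by
      nth_rewrite 1 [← Real.rpow_one ((x t).1 ^ 2 + (x t).2 ^ 2)]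
      rw [← Real.rpow_add (hq0 t)]
      congr 1
      ring
    rw [hs] at hid
    linear_combination hid + (2*μ/α) * hmul
  have hA : (0:ℝ) < 2*μ/α := by positivity
  have hC : (0:ℝ) < μ*(2-α)/α := by
    apply div_pos _ hα0
    nlinarith
  -- constant identification
  have hbase : Real.sqrt (μ/(2*α)) * (2+α) = (2+α)/2 * Real.sqrt (2*μ/α) := by
    have h4 : Real.sqrt (2*μ/α) = 2 * Real.sqrt (μ/(2*α)) := by
      rw [show 2*μ/α = 2^2 * (μ/(2*α)) by field_simp,
        Real.sqrt_mul (by positivity), Real.sqrt_sq (by norm_num : (0:ℝ) ≤ 2)]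
    rw [h4]; ring
  have hγ' : γ = (((2+α)/2 * Real.sqrt (2*μ/α)) ^ ((2:ℝ)/(2+α))) := by
    rw [hγ, hbase]
  constructor
  · have H := radial_atTop (2*μ/α) (c^2) (μ*(2-α)/α) α hA hC hα0 hα'
      (fun s => (x s).1 ^ 2 + (x s).2 ^ 2)
      (fun s => (x s).1 * (v s).1 + (x s).2 * (v s).2)
      hq0 hq' hu' hlag
    rw [hγ']
    exact H
  · have hq0' : ∀ s, 0 < (x (-s)).1 ^ 2 + (x (-s)).2 ^ 2 := fun s => hq0 (-s)
    have hq2' : ∀ s, HasDerivAt (fun s => (x (-s)).1 ^ 2 + (x (-s)).2 ^ 2)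
        (2 * (-((x (-s)).1 * (v (-s)).1 + (x (-s)).2 * (v (-s)).2))) s := by
      intro s
      have h := (hq' (-s)).comp s (hasDerivAt_neg s)
      simp only [Function.comp_def] at h
      refine h.congr_deriv ?_
      ring
    have hu2' : ∀ s, HasDerivAt
        (fun s => -((x (-s)).1 * (v (-s)).1 + (x (-s)).2 * (v (-s)).2))
        (μ*(2-α)/α * ((x (-s)).1 ^ 2 + (x (-s)).2 ^ 2) ^ (-(α/2) : ℝ)) s := by
      intro s
      have h := ((hu' (-s)).comp s (hasDerivAt_neg s)).neg
      simp only [Function.comp_def] at h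
      refine h.congr_deriv ?_
      ring
    have hlag2 : ∀ s, (-((x (-s)).1 * (v (-s)).1 + (x (-s)).2 * (v (-s)).2)) ^ 2
        = 2*μ/α * ((x (-s)).1 ^ 2 + (x (-s)).2 ^ 2) ^ (((2-α)/2 : ℝ)) - c^2 := by
      intro s
      rw [neg_sq]
      exact hlag (-s)
    have H := radial_atTop (2*μ/α) (c^2) (μ*(2-α)/α) α hA hC hα0 hα'
      (fun s => (x (-s)).1 ^ 2 + (x (-s)).2 ^ 2)
      (fun s => -((x (-s)).1 * (v (-s)).1 + (x (-s)).2 * (v (-s)).2))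
      hq0' hq2' hu2' hlag2
    have H2 := H.comp tendsto_neg_atBot_atTop
    rw [hγ']
    refine H2.congr ?_
    intro t
    simp [Function.comp, abs_neg, enorm2]
end

section
/- Let m > 0, α ∈ [1,2), K > 0, and let r : [t₁,t₂] → [K,∞) be a C² function with ṙ > 0 on (t₁,t₂], satisfying (d²/dt²)(½r²)(t) ≥ ((2-α)m)/(2α r(t)^α) for all t. Then t₂ - t₁ ≤ √(2α/((2-α)m)) · r(t₂)^{1+α/2}. -/
open Set

private lemma aux_mono {f f' g g' : ℝ → ℝ} {a b : ℝ} (hab : a ≤ b)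
    (hf : ∀ t ∈ Icc a b, HasDerivAt f (f' t) t)
    (hg : ∀ t ∈ Icc a b, HasDerivAt g (g' t) t)
    (hle : ∀ t ∈ Icc a b, g' t ≤ f' t)
    (h0 : g a ≤ f a) : g b ≤ f b := by
  have hmono : MonotoneOn (fun t => f t - g t) (Icc a b) := by
    apply monotoneOn_of_deriv_nonneg (convex_Icc a b)
    · exact fun t ht => ((hf t ht).sub (hg t ht)).continuousAt.continuousWithinAt
    · intro t ht
      rw [interior_Icc] at ht
      exact ((hf t (Ioo_subset_Icc_self ht)).sub
        (hg t (Ioo_subset_Icc_self ht))).differentiableAt.differentiableWithinAt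
    · intro t ht
      rw [interior_Icc] at ht
      rw [(show HasDerivAt (fun t => f t - g t) (f' t - g' t) t from
        (hf t (Ioo_subset_Icc_self ht)).sub (hg t (Ioo_subset_Icc_self ht))).deriv]
      exact sub_nonneg.mpr (hle t (Ioo_subset_Icc_self ht))
  have := hmono (left_mem_Icc.mpr hab) (right_mem_Icc.mpr hab) hab
  simp only at this
  linarith

theorem time_estimate_above
    (m α K : ℝ) (hm : 0 < m) (hα : 1 ≤ α) (hα' : α < 2) (hK : 0 < K)
    (t₁ t₂ : ℝ) (ht : t₁ ≤ t₂)
    (r r' d : ℝ → ℝ)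
    (hrange : ∀ t ∈ Icc t₁ t₂, K ≤ r t)
    (hr : ∀ t ∈ Icc t₁ t₂, HasDerivAt r (r' t) t)
    (hd : ∀ t ∈ Icc t₁ t₂, HasDerivAt (fun s => r s * r' s) (d t) t)
    (hr'pos : ∀ t ∈ Ioc t₁ t₂, 0 < r' t)
    (hLJ : ∀ t ∈ Icc t₁ t₂, (2 - α) * m / (2 * α * r t ^ α) ≤ d t) :
    t₂ - t₁ ≤ Real.sqrt (2 * α / ((2 - α) * m)) * r t₂ ^ (1 + α / 2) := by
  have hα0 : 0 < α := lt_of_lt_of_le one_pos hα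
  have h2α : 0 < 2 - α := by linarith
  have ht₂mem : t₂ ∈ Icc t₁ t₂ := right_mem_Icc.mpr ht
  have ht₁mem : t₁ ∈ Icc t₁ t₂ := left_mem_Icc.mpr ht
  have hrt₂ : 0 < r t₂ := hK.trans_le (hrange t₂ ht₂mem)
  have hrt₁ : 0 < r t₁ := hK.trans_le (hrange t₁ ht₁mem)
  rcases eq_or_lt_of_le ht with rfl | hlt
  · have : (0:ℝ) ≤ Real.sqrt (2 * α / ((2 - α) * m)) * r t₁ ^ (1 + α / 2) :=
      mul_nonneg (Real.sqrt_nonneg _) (Real.rpow_nonneg hrt₁.le _)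
    linarith
  -- r is monotone on the interval
  have hrmono : MonotoneOn r (Icc t₁ t₂) := by
    apply monotoneOn_of_deriv_nonneg (convex_Icc _ _)
    · exact fun t ht' => (hr t ht').continuousAt.continuousWithinAt
    · intro t ht'
      rw [interior_Icc] at ht'
      exact (hr t (Ioo_subset_Icc_self ht')).differentiableAt.differentiableWithinAt
    · intro t ht'
      rw [interior_Icc] at ht'
      rw [(hr t (Ioo_subset_Icc_self ht')).deriv]
      exact (hr'pos t ⟨ht'.1, ht'.2.le⟩).le
  set c : ℝ := (2 - α) * m / (2 * α * r t₂ ^ α) with hc_def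
  have hpowt₂ : (0:ℝ) < r t₂ ^ α := Real.rpow_pos_of_pos hrt₂ α
  have hc : 0 < c := div_pos (mul_pos h2α hm) (by positivity)
  -- d t ≥ c on the interval
  have hdge : ∀ t ∈ Icc t₁ t₂, c ≤ d t := by
    intro t ht'
    refine le_trans ?_ (hLJ t ht')
    have hrt : 0 < r t := hK.trans_le (hrange t ht')
    have hpow : (0:ℝ) < r t ^ α := Real.rpow_pos_of_pos hrt α
    have hle : r t ^ α ≤ r t₂ ^ α :=
      Real.rpow_le_rpow hrt.le (hrmono ht' ht₂mem ht'.2) hα0.le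
    apply div_le_div_of_nonneg_left (by positivity) (by positivity)
    nlinarith
  -- r t₁ * r' t₁ ≥ 0 by continuity
  have hg0 : 0 ≤ r t₁ * r' t₁ := by
    have hne : (nhdsWithin t₁ (Ioc t₁ t₂)).NeBot := by
      apply mem_closure_iff_nhdsWithin_neBot.mp
      rw [closure_Ioc hlt.ne]
      exact ht₁mem
    have htend : Filter.Tendsto (fun s => r s * r' s) (nhdsWithin t₁ (Ioc t₁ t₂))
        (nhds (r t₁ * r' t₁)) :=
      ((hd t₁ ht₁mem).continuousAt.continuousWithinAt).mono_left
        (nhdsWithin_mono _ Ioc_subset_Icc_self)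
    refine ge_of_tendsto htend ?_
    filter_upwards [self_mem_nhdsWithin] with s hs
    exact (mul_pos (hK.trans_le (hrange s (Ioc_subset_Icc_self hs))) (hr'pos s hs)).le
  -- first integration: c * (t - t₁) ≤ r t * r' t
  have key1 : ∀ t ∈ Icc t₁ t₂, c * (t - t₁) ≤ r t * r' t := by
    intro t ht'
    have hsub : Icc t₁ t ⊆ Icc t₁ t₂ := Icc_subset_Icc le_rfl ht'.2
    have := aux_mono (f := fun s => r s * r' s) (f' := d)
      (g := fun s => c * (s - t₁)) (g' := fun _ => c) ht'.1
      (fun s hs => hd s (hsub hs))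
      (fun s hs => by
        simpa using ((hasDerivAt_id s).sub_const t₁).const_mul c)
      (fun s hs => hdge s (hsub hs))
      (by simp [hg0])
    simpa using this
  -- second integration
  have key2 : c * (t₂ - t₁) ^ 2 + r t₁ * r t₁ ≤ r t₂ * r t₂ := by
    have := aux_mono (f := fun s => r s * r s) (f' := fun s => r' s * r s + r s * r' s)
      (g := fun s => c * (s - t₁) ^ 2 + r t₁ * r t₁)
      (g' := fun s => c * (2 * (s - t₁) ^ 1 * 1)) ht
      (fun s hs => (hr s hs).mul (hr s hs))
      (fun s hs => by
        exact (((((hasDerivAt_id s).sub_const t₁).pow 2).const_mul c).add_const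
          (r t₁ * r t₁)))
      (fun s hs => by
        have h1 := key1 s hs
        simp only [pow_one, mul_one]
        calc c * (2 * (s - t₁)) = 2 * (c * (s - t₁)) := by ring
          _ ≤ 2 * (r s * r' s) := by linarith
          _ = r' s * r s + r s * r' s := by ring)
      (by simp)
    simpa using this
  have hsq : (t₂ - t₁) ^ 2 ≤ (Real.sqrt (2 * α / ((2 - α) * m)) * r t₂ ^ (1 + α / 2)) ^ 2 := by
    have hX : (0:ℝ) ≤ 2 * α / ((2 - α) * m) := by positivity
    have hrw : (Real.sqrt (2 * α / ((2 - α) * m)) * r t₂ ^ (1 + α / 2)) ^ 2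
        = 2 * α / ((2 - α) * m) * (r t₂ ^ 2 * r t₂ ^ α) := by
      rw [mul_pow, Real.sq_sqrt hX]
      congr 1
      rw [← Real.rpow_natCast (r t₂ ^ (1 + α / 2)) 2, ← Real.rpow_mul hrt₂.le]
      rw [show ((1 + α / 2) * (2:ℕ) : ℝ) = 2 + α by push_cast; ring]
      rw [Real.rpow_add hrt₂, Real.rpow_two]
    rw [hrw]
    have hD : (0:ℝ) < 2 * α * r t₂ ^ α := by positivity
    have key2' : (2 - α) * m * (t₂ - t₁) ^ 2 ≤ r t₂ * r t₂ * (2 * α * r t₂ ^ α) := by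
      rw [hc_def] at key2
      have h := mul_le_mul_of_nonneg_right key2 hD.le
      rw [add_mul, div_mul_eq_mul_div, div_mul_cancel₀ _ hD.ne'] at h
      nlinarith [mul_pos (mul_pos hrt₁ hrt₁) hD]
    rw [div_mul_eq_mul_div, le_div_iff₀ (by positivity)]
    nlinarith [key2']
  calc t₂ - t₁ = Real.sqrt ((t₂ - t₁) ^ 2) := (Real.sqrt_sq (by linarith)).symm
    _ ≤ Real.sqrt ((Real.sqrt (2 * α / ((2 - α) * m)) * r t₂ ^ (1 + α / 2)) ^ 2) :=
        Real.sqrt_le_sqrt hsq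
    _ = _ := Real.sqrt_sq (mul_nonneg (Real.sqrt_nonneg _) (Real.rpow_nonneg hrt₂.le _))
end

section
/- Let α ∈ (0,2), m > 0, μ = m. Define u : [-1,1] → ℝ³ by u(t) = (-t)^{2/(2+α)} x₁ for t ∈ [-1,0] and u(t) = t^{2/(2+α)} x₂ for t ∈ [0,1], where x₁, x₂ ∈ 𝕊². Then u ∈ H¹([-1,1]; ℝ³) and the Maupertuis functional I(u) = (∫_{-1}^1 |u̇|²)(∫_{-1}^1 μ/(α|u|^α)) equals ½(√(2μ/α) · 4/(2-α))². -/
open Set MeasureTheory intervalIntegral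

theorem test_function_maupertuis_value
    (α μ : ℝ) (hα : 0 < α) (hα' : α < 2) (hμ : 0 < μ)
    (x₁ x₂ : EuclideanSpace ℝ (Fin 3)) (hx₁ : ‖x₁‖ = 1) (hx₂ : ‖x₂‖ = 1)
    (u : ℝ → EuclideanSpace ℝ (Fin 3))
    (hu : ∀ t : ℝ, u t = if t ≤ 0 then ((-t) ^ ((2:ℝ) / (2 + α))) • x₁
                         else (t ^ ((2:ℝ) / (2 + α))) • x₂) :
    ContinuousOn u (Icc (-1:ℝ) 1) ∧
    IntervalIntegrable (fun t => ‖deriv u t‖ ^ 2) volume (-1) 1 ∧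
    (∫ t in (-1:ℝ)..1, ‖deriv u t‖ ^ 2) *
      (∫ t in (-1:ℝ)..1, μ / (α * ‖u t‖ ^ α)) =
      (1 / 2) * (Real.sqrt (2 * μ / α) * 4 / (2 - α)) ^ 2 := by
  set p : ℝ := (2:ℝ) / (2 + α) with hpdef
  have h2α : (0:ℝ) < 2 + α := by linarith
  have hp0 : 0 < p := by positivity
  have hp1 : p < 1 := by rw [hpdef, div_lt_one h2α]; linarith
  have hphalf : 1 / 2 < p := by
    rw [hpdef]; rw [div_lt_div_iff₀ (by norm_num) h2α]; linarith
  have h2p : -1 < 2 * p - 2 := by linarith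
  have hpα1 : p * α < 1 := by
    have : p * α = 2 * α / (2 + α) := by rw [hpdef]; ring
    rw [this, div_lt_one h2α]; linarith
  have hpα0 : 0 < p * α := by positivity
  have hneg : -1 < -(p * α) := by linarith
  have hnegne : -(p * α) ≠ 0 := by
    intro hh; rw [neg_eq_zero] at hh; exact absurd hh hpα0.ne'
  -- continuity of rpow
  have hcrp : Continuous fun x : ℝ => x ^ p :=
    continuous_iff_continuousAt.2 fun x => Real.continuousAt_rpow_const x p (Or.inr hp0.le)
  have hufun : u = fun t => if t ≤ 0 then ((-t) ^ p) • x₁ else (t ^ p) • x₂ := funext hu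
  have hcont : Continuous u := by
    rw [hufun]
    refine Continuous.if_le ?_ ?_ continuous_id continuous_const ?_
    · exact (hcrp.comp continuous_neg).smul continuous_const
    · exact hcrp.smul continuous_const
    · intro x hx
      change x = 0 at hx
      subst hx
      simp [Real.zero_rpow hp0.ne']
  -- square of rpow
  have sq_rpow : ∀ x : ℝ, 0 < x → (x ^ (p - 1)) ^ 2 = x ^ (2 * p - 2) := by
    intro x hx
    rw [← Real.rpow_natCast (x ^ (p - 1)) 2, ← Real.rpow_mul hx.le]
    congr 1; push_cast; ring
  -- derivative formulas
  have hd_pos : ∀ t : ℝ, 0 < t → deriv u t = (p * t ^ (p - 1)) • x₂ := by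
    intro t ht
    have he : u =ᶠ[nhds t] fun s => (s ^ p) • x₂ := by
      filter_upwards [Ioi_mem_nhds ht] with s hs
      rw [hu s, if_neg (not_le.2 hs)]
    rw [he.deriv_eq]
    exact ((Real.hasDerivAt_rpow_const (Or.inl ht.ne')).smul_const x₂).deriv
  have hd_neg : ∀ t : ℝ, t < 0 → deriv u t = (p * (-t) ^ (p - 1) * (-1)) • x₁ := by
    intro t ht
    have he : u =ᶠ[nhds t] fun s => ((-s) ^ p) • x₁ := by
      filter_upwards [Iio_mem_nhds ht] with s hs
      rw [hu s, if_pos hs.le]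
    rw [he.deriv_eq]
    have h1 : HasDerivAt (fun x : ℝ => x ^ p) (p * (-t) ^ (p - 1)) (-t) :=
      Real.hasDerivAt_rpow_const (Or.inl (neg_ne_zero.2 ht.ne))
    have h2 : HasDerivAt (fun s : ℝ => (-s) ^ p) (p * (-t) ^ (p - 1) * (-1)) t :=
      h1.comp t (hasDerivAt_neg t)
    exact (h2.smul_const x₁).deriv
  have hnd_pos : ∀ t : ℝ, 0 < t → ‖deriv u t‖ ^ 2 = p ^ 2 * t ^ (2 * p - 2) := by
    intro t ht
    rw [hd_pos t ht, norm_smul, hx₂, mul_one, Real.norm_eq_abs,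
      abs_of_nonneg (by positivity : (0:ℝ) ≤ p * t ^ (p - 1)), mul_pow, sq_rpow t ht]
  have hnd_neg : ∀ t : ℝ, t < 0 → ‖deriv u t‖ ^ 2 = p ^ 2 * (-t) ^ (2 * p - 2) := by
    intro t ht
    have hmt : (0:ℝ) < -t := by linarith
    rw [hd_neg t ht, norm_smul, hx₁, mul_one, Real.norm_eq_abs, abs_mul]
    rw [abs_of_nonneg (by positivity : (0:ℝ) ≤ p * (-t) ^ (p - 1))]
    rw [mul_pow, mul_pow, sq_rpow (-t) hmt]
    norm_num
  -- potential formulas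
  have hpot_pos : ∀ t : ℝ, 0 ≤ t → μ / (α * ‖u t‖ ^ α) = (μ / α) * t ^ (-(p * α)) := by
    intro t ht
    rcases eq_or_lt_of_le ht with h | h
    · subst h
      rw [hu 0]
      simp [norm_smul, hx₁, Real.zero_rpow hp0.ne', Real.zero_rpow hα.ne',
        Real.zero_rpow hnegne]
    · rw [hu t, if_neg (not_le.2 h), norm_smul, hx₂, mul_one, Real.norm_eq_abs,
        abs_of_nonneg (Real.rpow_nonneg h.le p), ← Real.rpow_mul h.le,
        Real.rpow_neg h.le, div_mul_eq_div_div, div_eq_mul_inv]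
  have hpot_neg : ∀ t : ℝ, t ≤ 0 → μ / (α * ‖u t‖ ^ α) = (μ / α) * (-t) ^ (-(p * α)) := by
    intro t ht
    rcases eq_or_lt_of_le ht with h | h
    · subst h
      rw [hu 0]
      simp [norm_smul, hx₁, Real.zero_rpow hp0.ne', Real.zero_rpow hα.ne',
        Real.zero_rpow hnegne]
    · have hmt : (0:ℝ) < -t := by linarith
      rw [hu t, if_pos ht, norm_smul, hx₁, mul_one, Real.norm_eq_abs,
        abs_of_nonneg (Real.rpow_nonneg hmt.le p), ← Real.rpow_mul hmt.le,
        Real.rpow_neg hmt.le, div_mul_eq_div_div, div_eq_mul_inv]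
  -- a.e. nonzero
  have hne0 : ∀ᵐ t : ℝ ∂volume, t ≠ 0 := by
    rw [ae_iff]
    simpa using measure_singleton (0:ℝ)
  -- integrability of kinetic term
  have hInt_pos : IntervalIntegrable (fun t => ‖deriv u t‖ ^ 2) volume 0 1 := by
    refine ((intervalIntegrable_rpow' h2p (a := 0) (b := 1)).const_mul (p ^ 2)).congr_ae ?_
    rw [uIoc_of_le (by norm_num : (0:ℝ) ≤ 1)]
    filter_upwards [ae_restrict_mem measurableSet_Ioc] with t ht
    exact (hnd_pos t ht.1).symm
  have hInt_neg : IntervalIntegrable (fun t => ‖deriv u t‖ ^ 2) volume (-1) 0 := by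
    have hbase : IntervalIntegrable (fun x : ℝ => p ^ 2 * (-x) ^ (2 * p - 2)) volume (-1) 0 := by
      have := (IntervalIntegrable.iff_comp_neg enorm_ne_top).mp
        ((intervalIntegrable_rpow' h2p (a := 1) (b := 0)).const_mul (p ^ 2))
      simpa using this
    refine hbase.congr_ae ?_
    rw [uIoc_of_le (by norm_num : (-1:ℝ) ≤ 0)]
    filter_upwards [ae_restrict_mem measurableSet_Ioc, ae_restrict_of_ae hne0] with t ht htne
    exact (hnd_neg t (lt_of_le_of_ne ht.2 htne)).symm
  -- integrability of potential term
  have hPInt_pos : IntervalIntegrable (fun t => μ / (α * ‖u t‖ ^ α)) volume 0 1 := by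
    refine ((intervalIntegrable_rpow' hneg (a := 0) (b := 1)).const_mul (μ / α)).congr_ae ?_
    rw [uIoc_of_le (by norm_num : (0:ℝ) ≤ 1)]
    filter_upwards [ae_restrict_mem measurableSet_Ioc] with t ht
    exact (hpot_pos t ht.1.le).symm
  have hPInt_neg : IntervalIntegrable (fun t => μ / (α * ‖u t‖ ^ α)) volume (-1) 0 := by
    have hbase : IntervalIntegrable (fun x : ℝ => (μ / α) * (-x) ^ (-(p * α))) volume (-1) 0 := by
      have := (IntervalIntegrable.iff_comp_neg enorm_ne_top).mp
        ((intervalIntegrable_rpow' hneg (a := 1) (b := 0)).const_mul (μ / α))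
      simpa using this
    refine hbase.congr_ae ?_
    rw [uIoc_of_le (by norm_num : (-1:ℝ) ≤ 0)]
    filter_upwards [ae_restrict_mem measurableSet_Ioc] with t ht
    exact (hpot_neg t ht.2).symm
  -- values of the four integrals
  have hval_rpow1 : (∫ t in (0:ℝ)..1, t ^ (2 * p - 2)) = 1 / (2 * p - 1) := by
    rw [integral_rpow (Or.inl h2p)]
    rw [Real.one_rpow, Real.zero_rpow (by intro hh; linarith [hh] : 2 * p - 2 + 1 ≠ 0)]
    ring_nf
  have hval_rpow2 : (∫ t in (0:ℝ)..1, t ^ (-(p * α))) = 1 / (1 - p * α) := by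
    rw [integral_rpow (Or.inl hneg)]
    rw [Real.one_rpow, Real.zero_rpow (by intro hh; linarith [hh] : -(p * α) + 1 ≠ 0)]
    ring_nf
  have hE_pos : (∫ t in (0:ℝ)..1, ‖deriv u t‖ ^ 2) = p ^ 2 * (1 / (2 * p - 1)) := by
    have hae : ∀ᵐ x : ℝ ∂volume, x ∈ uIoc (0:ℝ) 1 → ‖deriv u x‖ ^ 2 = p ^ 2 * x ^ (2 * p - 2) := by
      refine Filter.Eventually.of_forall fun t ht => ?_
      rw [uIoc_of_le (by norm_num : (0:ℝ) ≤ 1)] at ht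
      exact hnd_pos t ht.1
    rw [intervalIntegral.integral_congr_ae hae, intervalIntegral.integral_const_mul, hval_rpow1]
  have hE_neg : (∫ t in (-1:ℝ)..0, ‖deriv u t‖ ^ 2) = p ^ 2 * (1 / (2 * p - 1)) := by
    have hae : ∀ᵐ x : ℝ ∂volume, x ∈ uIoc (-1:ℝ) 0 → ‖deriv u x‖ ^ 2 = p ^ 2 * (-x) ^ (2 * p - 2) := by
      filter_upwards [hne0] with t htne ht
      rw [uIoc_of_le (by norm_num : (-1:ℝ) ≤ 0)] at ht
      exact hnd_neg t (lt_of_le_of_ne ht.2 htne)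
    rw [intervalIntegral.integral_congr_ae hae]
    have := integral_comp_neg (a := -1) (b := 0) (fun x : ℝ => p ^ 2 * x ^ (2 * p - 2))
    simp only [neg_zero, neg_neg] at this
    rw [this, intervalIntegral.integral_const_mul, hval_rpow1]
  have hJ_pos : (∫ t in (0:ℝ)..1, μ / (α * ‖u t‖ ^ α)) = (μ / α) * (1 / (1 - p * α)) := by
    have hae : ∀ᵐ x : ℝ ∂volume, x ∈ uIoc (0:ℝ) 1 →
        μ / (α * ‖u x‖ ^ α) = (μ / α) * x ^ (-(p * α)) := by
      refine Filter.Eventually.of_forall fun t ht => ?_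
      rw [uIoc_of_le (by norm_num : (0:ℝ) ≤ 1)] at ht
      exact hpot_pos t ht.1.le
    rw [intervalIntegral.integral_congr_ae hae, intervalIntegral.integral_const_mul, hval_rpow2]
  have hJ_neg : (∫ t in (-1:ℝ)..0, μ / (α * ‖u t‖ ^ α)) = (μ / α) * (1 / (1 - p * α)) := by
    have hae : ∀ᵐ x : ℝ ∂volume, x ∈ uIoc (-1:ℝ) 0 →
        μ / (α * ‖u x‖ ^ α) = (μ / α) * (-x) ^ (-(p * α)) := by
      refine Filter.Eventually.of_forall fun t ht => ?_
      rw [uIoc_of_le (by norm_num : (-1:ℝ) ≤ 0)] at ht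
      exact hpot_neg t ht.2
    rw [intervalIntegral.integral_congr_ae hae]
    have := integral_comp_neg (a := -1) (b := 0) (fun x : ℝ => (μ / α) * x ^ (-(p * α)))
    simp only [neg_zero, neg_neg] at this
    rw [this, intervalIntegral.integral_const_mul, hval_rpow2]
  refine ⟨hcont.continuousOn, hInt_neg.trans hInt_pos, ?_⟩
  rw [← integral_add_adjacent_intervals hInt_neg hInt_pos,
    ← integral_add_adjacent_intervals hPInt_neg hPInt_pos,
    hE_pos, hE_neg, hJ_pos, hJ_neg]
  have hd3 : (2:ℝ) - α ≠ 0 := by intro hh; linarith [hh]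
  have hR : (1:ℝ) / 2 * (Real.sqrt (2 * μ / α) * 4 / (2 - α)) ^ 2
      = 16 * μ / (α * (2 - α) ^ 2) := by
    rw [div_pow, mul_pow, Real.sq_sqrt (by positivity : (0:ℝ) ≤ 2 * μ / α)]
    field_simp
    ring
  rw [hR]
  have h2p1 : 2 * p - 1 = (2 - α) / (2 + α) := by rw [hpdef]; field_simp; ring
  have h1pα : 1 - p * α = (2 - α) / (2 + α) := by rw [hpdef]; field_simp; ring
  rw [h2p1, h1pα, hpdef]
  field_simp
  ring
end
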